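/- Consider the Kramers–Fokker–Planck quadratic symbol q(x,v,ξ,η) = η² + v²/4 + i(vξ − a x η) on ℝ⁴ with a ∈ ℝ, a ≠ 0. Then Re q ≥ 0, q is not elliptic on ℝ⁴ (it has nonzero real zeros), but its singular space S = (⋂_{j=0}^{3} Ker[Re F (Im F)^j]) ∩ ℝ⁴ is {0}, where F is the Hamilton map of q. -/
import Mathlib


/-- The canonical symplectic form on `ℝ⁴` with coordinates `X = (x, v, ξ, η)`:
`σ(X, Y) = (ξ,η)·(y,w) − (x,v)·(ζ,θ)`. -/
def sigma4 (X Y : ℝ × ℝ × ℝ × ℝ) : ℝ :=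
  X.2.2.1 * Y.1 + X.2.2.2 * Y.2.1 - X.1 * Y.2.2.1 - X.2.1 * Y.2.2.2

/-- Consider the Kramers–Fokker–Planck quadratic symbol
`q(x,v,ξ,η) = η² + v²/4 + i(vξ − a x η)` on `ℝ⁴` with `a ≠ 0`, whose Hamilton map is
`F = F₁ + i F₂` with `σ(X, F₁ Y)`, `σ(X, F₂ Y)` the polarizations of `Re q`, `Im q`.
Then `Re q ≥ 0`, `q` is not elliptic on `ℝ⁴` (it has a nonzero real zero), but its
singular space `S = ⋂_{j=0}^{3} Ker[Re F (Im F)^j] ∩ ℝ⁴` is `{0}`. -/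
theorem stmt_19 (a : ℝ) (ha : a ≠ 0)
    (F₁ F₂ : (ℝ × ℝ × ℝ × ℝ) →ₗ[ℝ] (ℝ × ℝ × ℝ × ℝ))
    (hF₁ : ∀ X Y : ℝ × ℝ × ℝ × ℝ,
      sigma4 X (F₁ Y) = X.2.2.2 * Y.2.2.2 + X.2.1 * Y.2.1 / 4)
    (hF₂ : ∀ X Y : ℝ × ℝ × ℝ × ℝ,
      sigma4 X (F₂ Y) =
        (X.2.1 * Y.2.2.1 + X.2.2.1 * Y.2.1) / 2 - a * (X.1 * Y.2.2.2 + X.2.2.2 * Y.1) / 2) :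
    (∀ X : ℝ × ℝ × ℝ × ℝ, 0 ≤ X.2.2.2 ^ 2 + X.2.1 ^ 2 / 4) ∧
    (∃ X : ℝ × ℝ × ℝ × ℝ, X ≠ 0 ∧
        ((X.2.2.2 ^ 2 + X.2.1 ^ 2 / 4 : ℝ) : ℂ) +
            Complex.I * ((X.2.1 * X.2.2.1 - a * X.1 * X.2.2.2 : ℝ) : ℂ) = 0) ∧
    (∀ X : ℝ × ℝ × ℝ × ℝ, (∀ j < 4, F₁ ((F₂ ^ j) X) = 0) → X = 0) := by
  have e1 : ∀ Y : ℝ × ℝ × ℝ × ℝ, F₁ Y = (0, Y.2.2.2, 0, -(Y.2.1/4)) := by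
    intro Y
    have h1 := hF₁ (1,0,0,0) Y
    have h2 := hF₁ (0,1,0,0) Y
    have h3 := hF₁ (0,0,1,0) Y
    have h4 := hF₁ (0,0,0,1) Y
    simp only [sigma4] at h1 h2 h3 h4
    refine Prod.ext ?_ (Prod.ext ?_ (Prod.ext ?_ ?_)) <;> simp <;> linarith
  have e2 : ∀ Y : ℝ × ℝ × ℝ × ℝ,
      F₂ Y = (Y.2.1/2, -(a*Y.1/2), a*Y.2.2.2/2, -(Y.2.2.1/2)) := by
    intro Y
    have h1 := hF₂ (1,0,0,0) Y
    have h2 := hF₂ (0,1,0,0) Y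
    have h3 := hF₂ (0,0,1,0) Y
    have h4 := hF₂ (0,0,0,1) Y
    simp only [sigma4] at h1 h2 h3 h4
    refine Prod.ext ?_ (Prod.ext ?_ (Prod.ext ?_ ?_)) <;> simp <;> linarith
  refine ⟨fun X => by positivity, ⟨(1,0,0,0), by simp, by norm_num⟩, ?_⟩
  intro X h
  have h0 := h 0 (by norm_num)
  have h1 := h 1 (by norm_num)
  simp only [pow_zero, pow_one, Module.End.one_apply] at h0 h1
  rw [e1] at h0 h1
  rw [e2] at h1
  obtain ⟨x, v, xi, eta⟩ := X
  simp only [Prod.ext_iff, Prod.fst_zero, Prod.snd_zero, neg_eq_zero, div_eq_zero_iff,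
    mul_eq_zero, ha, false_or] at h0 h1
  simp only [Prod.ext_iff, Prod.fst_zero, Prod.snd_zero]
  norm_num at h0 h1 ⊢
  tauto
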